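/- Let d be a positive integer, let a_1,…,a_p and b_1,…,b_q be positive integers with a_1+⋯+a_p = b_1+⋯+b_q = d, and set m = p+q−2. Assume m > 0 and m < d / gcd(a_1,…,a_p,b_1,…,b_q). Then there exist permutations τ_1, τ_2, σ_1 of {1,…,d} such that: (i) τ_1 τ_2 σ_1 is the identity; (ii) the cycle partition of τ_1 is (a_1,…,a_p), the cycle partition of τ_2 is (b_1,…,b_q), and σ_1 is a cycle of length m+1; (iii) the subgroup of S_d generated by τ_1, τ_2, σ_1 acts transitively on {1,…,d}. -/

import Mathlib

open Equiv Equiv.Perm List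

section BoccaraAux
set_option linter.unusedSectionVars false

variable {α : Type*} [DecidableEq α]

/-- key splicing lemma -/
lemma formPerm_append_getLast : ∀ (M : List α) (L : List α) (h : M ≠ []),
    (M ++ L).formPerm = M.formPerm * (M.getLast h :: L).formPerm := by
  intro M
  induction M with
  | nil => intro L h; exact absurd rfl h
  | cons m M ih =>
    intro L h
    cases M with
    | nil => simp [List.formPerm_singleton]
    | cons m₂ M' =>
      have hne : (m₂ :: M') ≠ [] := by simp
      have : ((m :: m₂ :: M') ++ L) = m :: m₂ :: (M' ++ L) := by simp
      rw [this, List.formPerm_cons_cons, show (m₂ :: (M' ++ L)) = (m₂ :: M') ++ L from rfl,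
        ih L hne, ← mul_assoc, ← List.formPerm_cons_cons, List.getLast_cons hne]

lemma prod_formPerm_apply_of_fix (Ls : List (List α)) (x : α) (h : ∀ l ∈ Ls, x ∉ l) :
    (Ls.map List.formPerm).prod x = x := by
  induction Ls with
  | nil => simp
  | cons l Ls ih =>
    simp only [List.map_cons, List.prod_cons, Equiv.Perm.mul_apply]
    rw [ih (fun l' hl' => h l' (by simp [hl'])), List.formPerm_apply_of_notMem (h l (by simp))]

lemma disjoint_formPerm_of_listDisjoint {l₁ l₂ : List α} (h : l₁.Disjoint l₂) :
    l₁.formPerm.Disjoint l₂.formPerm := by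
  intro x
  by_cases hx : x ∈ l₁
  · exact Or.inr (List.formPerm_apply_of_notMem (fun hx2 => h hx hx2))
  · exact Or.inl (List.formPerm_apply_of_notMem hx)

lemma disjoint_formPerm_prod {l : List α} {Ls : List (List α)} (h : ∀ l' ∈ Ls, l.Disjoint l') :
    l.formPerm.Disjoint (Ls.map List.formPerm).prod := by
  intro x
  by_cases hx : x ∈ l
  · exact Or.inr (prod_formPerm_apply_of_fix Ls x (fun l' hl' hxl' => h l' hl' hx hxl'))
  · exact Or.inl (List.formPerm_apply_of_notMem hx)

lemma pairwise_commute_formPerm {Ls : List (List α)} (h : Ls.Pairwise List.Disjoint) :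
    (Ls.map List.formPerm).Pairwise Commute := by
  refine List.Pairwise.map _ (fun l₁ l₂ hd => ?_) h
  exact (disjoint_formPerm_of_listDisjoint hd).commute

lemma sameCycle_mul_of_disjoint {f g : Equiv.Perm α} (h : f.Disjoint g) {x y : α}
    (hxy : f.SameCycle x y) : (f * g).SameCycle x y := by
  obtain ⟨i, hi⟩ := hxy
  by_cases hx : g x = x
  · refine ⟨i, ?_⟩
    rw [h.commute.mul_zpow, Equiv.Perm.mul_apply,
      zpow_apply_eq_self_of_apply_eq_self hx i, hi]
  · have hfx : f x = x := (h x).resolve_right hx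
    have hfix : (f ^ i) x = x := zpow_apply_eq_self_of_apply_eq_self hfx i
    exact ⟨0, by simp [← hi, hfix]⟩

/-! ## The `Works` predicate -/

def blocksProd {d : ℕ} (Ls : List (List (Fin d))) : Equiv.Perm (Fin d) :=
  (Ls.map List.formPerm).prod

def Works (d n : ℕ) (A B : Multiset ℕ) : Prop :=
  ∃ (LA LB : List (List (Fin d))) (S : List (Fin d)),
    (↑(LA.map List.length) : Multiset ℕ) = A ∧
    (↑(LB.map List.length) : Multiset ℕ) = B ∧
    LA.flatten.Nodup ∧ LB.flatten.Nodup ∧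
    (∀ x : Fin d, x ∈ LA.flatten ↔ (x : ℕ) < n) ∧
    (∀ x : Fin d, x ∈ LB.flatten ↔ (x : ℕ) < n) ∧
    [] ∉ LA ∧ [] ∉ LB ∧
    S.Nodup ∧ (∀ x ∈ S, (x : ℕ) < n) ∧
    blocksProd LA * blocksProd LB * S.formPerm = 1 ∧
    ((S = [] ∧ LA.length = 1 ∧ LB.length = 1) ∨
     (2 ≤ S.length ∧ S.length + 1 = LA.length + LB.length ∧
      (∀ bl ∈ LA, ∃ s ∈ S, s ∈ bl) ∧ (∀ bl ∈ LB, ∃ s ∈ S, s ∈ bl)))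

lemma blocksProd_map_reverse {d : ℕ} (Ls : List (List (Fin d)))
    (h : Ls.Pairwise List.Disjoint) :
    blocksProd (Ls.map List.reverse) = (blocksProd Ls)⁻¹ := by
  induction Ls with
  | nil => simp [blocksProd]
  | cons l Ls ih =>
    have hd : ∀ l' ∈ Ls, l.Disjoint l' := fun l' hl' => (List.pairwise_cons.mp h).1 l' hl'
    have hcomm : Commute l.formPerm (blocksProd Ls) :=
      (disjoint_formPerm_prod hd).commute
    simp only [blocksProd, List.map_cons, List.prod_cons] at *
    rw [List.formPerm_reverse, ih (List.pairwise_cons.mp h).2, mul_inv_rev]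
    exact hcomm.inv_inv.eq

lemma flatten_map_reverse_perm (Ls : List (List α)) :
    (Ls.map List.reverse).flatten ~ Ls.flatten := by
  induction Ls with
  | nil => simp
  | cons l Ls ih =>
    simp only [List.map_cons, List.flatten_cons]
    exact (l.reverse_perm).append ih

lemma works_symm {d n : ℕ} {A B : Multiset ℕ} (h : Works d n A B) : Works d n B A := by
  obtain ⟨LA, LB, S, h1, h2, h3, h4, h5, h6, h7, h8, h9, h10, h11, h12⟩ := h
  have hpwA : LA.Pairwise List.Disjoint := (List.nodup_flatten.mp h3).2
  have hpwB : LB.Pairwise List.Disjoint := (List.nodup_flatten.mp h4).2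
  refine ⟨LB.map List.reverse, LA.map List.reverse, S.reverse, ?_, ?_, ?_, ?_, ?_, ?_, ?_, ?_,
    ?_, ?_, ?_, ?_⟩
  · rw [List.map_map,
      show (List.length ∘ List.reverse : List (Fin d) → ℕ) = List.length from
        funext fun l => List.length_reverse]
    exact h2
  · rw [List.map_map,
      show (List.length ∘ List.reverse : List (Fin d) → ℕ) = List.length from
        funext fun l => List.length_reverse]
    exact h1
  · exact (flatten_map_reverse_perm LB).nodup_iff.mpr h4
  · exact (flatten_map_reverse_perm LA).nodup_iff.mpr h3
  · intro x; rw [(flatten_map_reverse_perm LB).mem_iff]; exact h6 x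
  · intro x; rw [(flatten_map_reverse_perm LA).mem_iff]; exact h5 x
  · intro hc
    obtain ⟨l, hl, hl2⟩ := List.mem_map.mp hc
    have hl' : l = [] := by simpa using hl2
    exact h8 (hl' ▸ hl)
  · intro hc
    obtain ⟨l, hl, hl2⟩ := List.mem_map.mp hc
    have hl' : l = [] := by simpa using hl2
    exact h7 (hl' ▸ hl)
  · exact List.nodup_reverse.mpr h9
  · intro x hx; exact h10 x (List.mem_reverse.mp hx)
  · have hσ : (blocksProd LA * blocksProd LB)⁻¹ = S.formPerm :=
      inv_eq_of_mul_eq_one_right h11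
    rw [blocksProd_map_reverse _ hpwB, blocksProd_map_reverse _ hpwA, List.formPerm_reverse,
      ← hσ, inv_inv]
    group
  · rcases h12 with ⟨hS, hA, hB⟩ | ⟨hS1, hS2, hSA, hSB⟩
    · exact Or.inl ⟨by simp [hS], by simpa using hB, by simpa using hA⟩
    · refine Or.inr ⟨by simpa using hS1, ?_, ?_, ?_⟩
      · simp only [List.length_reverse, List.length_map]; omega
      · intro bl hbl
        obtain ⟨l, hl, rfl⟩ := List.mem_map.mp hbl
        obtain ⟨s, hs1, hs2⟩ := hSB l hl
        exact ⟨s, List.mem_reverse.mpr hs1, List.mem_reverse.mpr hs2⟩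
      · intro bl hbl
        obtain ⟨l, hl, rfl⟩ := List.mem_map.mp hbl
        obtain ⟨s, hs1, hs2⟩ := hSA l hl
        exact ⟨s, List.mem_reverse.mpr hs1, List.mem_reverse.mpr hs2⟩

/-! ## fresh points -/

def freshList (d n k : ℕ) (h : n + k ≤ d) : List (Fin d) :=
  (List.range k).pmap (fun t ht => (⟨n + t, by omega⟩ : Fin d))
    (fun t ht => List.mem_range.mp ht)

lemma freshList_length (d n k : ℕ) (h : n + k ≤ d) : (freshList d n k h).length = k := by
  simp [freshList]

lemma freshList_nodup (d n k : ℕ) (h : n + k ≤ d) : (freshList d n k h).Nodup := by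
  refine List.Nodup.pmap ?_ List.nodup_range
  intro a _ b _ hab
  simpa using congrArg Fin.val hab

lemma mem_freshList_iff (d n k : ℕ) (h : n + k ≤ d) (x : Fin d) :
    x ∈ freshList d n k h ↔ n ≤ (x : ℕ) ∧ (x : ℕ) < n + k := by
  simp only [freshList, List.mem_pmap, List.mem_range]
  constructor
  · rintro ⟨t, ht, rfl⟩; simp; omega
  · rintro ⟨h1, h2⟩
    exact ⟨(x : ℕ) - n, by omega, by ext; simp; omega⟩

lemma freshList_ne_nil (d n k : ℕ) (h : n + k ≤ d) (hk : 0 < k) : freshList d n k h ≠ [] := by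
  intro hc
  have := freshList_length d n k h
  rw [hc] at this
  simp at this
  omega


@[simp] lemma blocksProd_def {d : ℕ} (Ls : List (List (Fin d))) :
    blocksProd Ls = (Ls.map List.formPerm).prod := rfl

lemma works_attachA {d n : ℕ} {A B : Multiset ℕ} {a k : ℕ} (hdk : n + k ≤ d)
    (ha : a ∈ A) (hk : 0 < k) (h : Works d n A B) :
    Works d (n + k) ((a + k) ::ₘ A.erase a) (k ::ₘ B) := by
  classical
  obtain ⟨LA, LB, S, h1, h2, h3, h4, h5, h6, h7, h8, h9, h10, h11, h12⟩ := h
  set L := freshList d n k hdk with hLdef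
  have hLlen : L.length = k := freshList_length d n k hdk
  have hLnodup : L.Nodup := freshList_nodup d n k hdk
  have hLmem : ∀ x : Fin d, x ∈ L ↔ n ≤ (x : ℕ) ∧ (x : ℕ) < n + k :=
    mem_freshList_iff d n k hdk
  have hLne : L ≠ [] := freshList_ne_nil d n k hdk hk
  obtain ⟨x₁, L', hL'⟩ : ∃ x₁ L', L = x₁ :: L' :=
    ⟨L.head hLne, L.tail, (List.cons_head_tail hLne).symm⟩
  have hx₁L : x₁ ∈ L := by rw [hL']; exact List.mem_cons_self
  have hx₁n : n ≤ (x₁ : ℕ) ∧ (x₁ : ℕ) < n + k := (hLmem x₁).mp hx₁L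
  -- the block of length a
  have haL : a ∈ LA.map List.length := by
    rw [← Multiset.mem_coe, h1]; exact ha
  obtain ⟨bl, hblLA, hbllen⟩ : ∃ bl ∈ LA, bl.length = a := List.mem_map.mp haL
  have hnfA := List.nodup_flatten.mp h3
  have hblnodup : bl.Nodup := hnfA.1 bl hblLA
  have hpwA : LA.Pairwise List.Disjoint := hnfA.2
  have hblsub : ∀ x ∈ bl, x ∈ LA.flatten := fun x hx => List.mem_flatten.mpr ⟨bl, hblLA, hx⟩
  have hblbound : ∀ x ∈ bl, (x : ℕ) < n := fun x hx => (h5 x).mp (hblsub x hx)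
  have hblne : bl ≠ [] := fun hc => h7 (hc ▸ hblLA)
  -- decomposition of LA
  obtain ⟨la1, la2, hLAdecomp⟩ := List.append_of_mem hblLA
  set rest := la1 ++ la2 with hrestdef
  have hpermLA : LA ~ bl :: rest := by rw [hLAdecomp]; exact List.perm_middle
  have hrest_sub : ∀ bl' ∈ rest, bl' ∈ LA := by
    intro bl' hbl'
    rw [hLAdecomp]
    rcases List.mem_append.mp hbl' with hb | hb
    · exact List.mem_append.mpr (Or.inl hb)
    · exact List.mem_append.mpr (Or.inr (List.mem_cons_of_mem _ hb))
  have hLfreshA : ∀ x ∈ L, x ∉ LA.flatten := by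
    intro x hx hc
    have := (h5 x).mp hc
    have := ((hLmem x).mp hx).1
    omega
  have hLfreshB : ∀ x ∈ L, x ∉ LB.flatten := by
    intro x hx hc
    have := (h6 x).mp hc
    have := ((hLmem x).mp hx).1
    omega
  have hLfreshS : ∀ x ∈ L, x ∉ S := by
    intro x hx hc
    have := h10 x hc
    have := ((hLmem x).mp hx).1
    omega
  have hx₁S : x₁ ∉ S := hLfreshS x₁ hx₁L
  -- package: choose y and the new support list
  obtain ⟨y, Snew, hybl, hSnewform, hSnewnodup, hSnewbound, hSnewlen2, hSnewlen,
      hmeetsRest, hmeetsB, hySnew, hx₁Snew⟩ :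
      ∃ (y : Fin d) (Snew : List (Fin d)),
        y ∈ bl ∧
        Snew.formPerm = S.formPerm * Equiv.swap y x₁ ∧
        Snew.Nodup ∧
        (∀ x ∈ Snew, (x : ℕ) < n ∨ x = x₁) ∧
        2 ≤ Snew.length ∧
        Snew.length + 1 = LA.length + (LB.length + 1) ∧
        (∀ bl' ∈ rest, ∃ s ∈ Snew, s ∈ bl') ∧
        (∀ bl' ∈ LB, ∃ s ∈ Snew, s ∈ bl') ∧ y ∈ Snew ∧ x₁ ∈ Snew := by
    rcases h12 with ⟨hS, hAlen, hBlen⟩ | ⟨hS2, hSlen, hSA, hSB⟩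
    · -- base case : S = []
      obtain ⟨bl0, hbl0⟩ := List.length_eq_one_iff.mp hAlen
      have hLAeq : LA = [bl] := by
        rw [hbl0] at hblLA ⊢
        simp only [List.mem_singleton] at hblLA
        rw [hblLA]
      obtain ⟨blB, hblB⟩ := List.length_eq_one_iff.mp hBlen
      have hybl : bl.head hblne ∈ bl := List.head_mem hblne
      set y := bl.head hblne with hy
      have hyn : (y : ℕ) < n := hblbound y hybl
      have hyx₁ : y ≠ x₁ := by
        intro hc
        have := hx₁n.1
        rw [← hc] at this
        omega
      refine ⟨y, [y, x₁], hybl, ?_, ?_, ?_, ?_, ?_, ?_, ?_, ?_, ?_⟩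
      · rw [hS, List.formPerm_nil, one_mul, List.formPerm_pair]
      · simp [hyx₁]
      · intro x hx
        rcases List.mem_pair.mp hx with rfl | rfl
        · exact Or.inl hyn
        · exact Or.inr rfl
      · simp
      · simp [hLAeq, hBlen]
      · intro bl' hbl'
        have : bl' ∈ LA := hrest_sub bl' hbl'
        rw [hLAeq, List.mem_singleton] at this
        subst this
        exact ⟨y, by simp, hybl⟩
      · intro bl' hbl'
        rw [hblB] at hbl'
        simp only [List.mem_singleton] at hbl'
        subst hbl'
        refine ⟨y, by simp, ?_⟩
        have : y ∈ LB.flatten := (h6 y).mpr hyn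
        rw [hblB] at this
        simpa using this
      · simp
      · simp
    · -- general case
      obtain ⟨y, hyS, hybl⟩ := hSA bl hblLA
      obtain ⟨su, sv, hSdecomp⟩ := List.append_of_mem hyS
      set MS := sv ++ (su ++ [y]) with hMSdef
      have hMSrot : S.rotate (su.length + 1) = MS := by
        have hlen : su.length + 1 ≤ S.length := by
          rw [hSdecomp]; simp
        rw [List.rotate_eq_drop_append_take hlen, hSdecomp]
        have hre : su ++ y :: sv = (su ++ [y]) ++ sv := by simp
        rw [hre]
        have hlen2 : su.length + 1 = (su ++ [y]).length := by simp
        rw [hlen2, List.drop_left, List.take_left]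
      have hMSform : MS.formPerm = S.formPerm := by
        rw [← hMSrot, List.formPerm_rotate _ h9]
      have hMSne : MS ≠ [] := by simp [hMSdef]
      have hMSmem : ∀ x : Fin d, x ∈ MS ↔ x ∈ S := by
        intro x; rw [← hMSrot]; exact List.mem_rotate
      have hMSnodup : MS.Nodup := by rw [← hMSrot]; exact List.nodup_rotate.mpr h9
      have hMSlen : MS.length = S.length := by rw [← hMSrot, List.length_rotate]
      have hMSlast : MS.getLast hMSne = y := by
        have hre : MS = (sv ++ su) ++ [y] := by simp [hMSdef]
        rw [show MS.getLast hMSne = ((sv ++ su) ++ [y]).getLast (by simp) from by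
          congr 1]
        exact List.getLast_concat
      refine ⟨y, MS ++ [x₁], hybl, ?_, ?_, ?_, ?_, ?_, ?_, ?_, ?_, ?_⟩
      · rw [formPerm_append_getLast MS [x₁] hMSne, hMSlast, hMSform, List.formPerm_pair]
      · refine List.Nodup.append hMSnodup (List.nodup_singleton x₁) ?_
        intro t htMS htx
        rw [List.mem_singleton] at htx
        subst htx
        exact hx₁S ((hMSmem t).mp htMS)
      · intro x hx
        rcases List.mem_append.mp hx with hx | hx
        · exact Or.inl (h10 x ((hMSmem x).mp hx))
        · exact Or.inr (List.mem_singleton.mp hx)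
      · simp only [List.length_append, List.length_singleton, hMSlen]; omega
      · simp only [List.length_append, List.length_singleton, hMSlen]
        have : LA.length = rest.length + 1 := by
          rw [hLAdecomp, hrestdef]; simp; omega
        omega
      · intro bl' hbl'
        obtain ⟨s, hsS, hsbl'⟩ := hSA bl' (hrest_sub bl' hbl')
        exact ⟨s, List.mem_append.mpr (Or.inl ((hMSmem s).mpr hsS)), hsbl'⟩
      · intro bl' hbl'
        obtain ⟨s, hsS, hsbl'⟩ := hSB bl' hbl'
        exact ⟨s, List.mem_append.mpr (Or.inl ((hMSmem s).mpr hsS)), hsbl'⟩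
      · exact List.mem_append.mpr (Or.inl ((hMSmem y).mpr hyS))
      · exact List.mem_append.mpr (Or.inr (by simp))
  -- rotated block through y
  obtain ⟨u, v, hbl_decomp⟩ := List.append_of_mem hybl
  set blrot := y :: (v ++ u) with hblrotdef
  have hblrot_rotate : bl.rotate u.length = blrot := by
    have hlen : u.length ≤ bl.length := by rw [hbl_decomp]; simp
    rw [hbl_decomp, List.rotate_eq_drop_append_take (by simp : u.length ≤ (u ++ y :: v).length),
      List.drop_left, List.take_left, hblrotdef]
    simp
  have hblrot_perm : blrot ~ bl := by
    rw [← hblrot_rotate]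
    exact List.rotate_perm bl u.length
  have hblrotform : blrot.formPerm = bl.formPerm := by
    rw [← hblrot_rotate, List.formPerm_rotate _ hblnodup]
  have hblrot_ne : blrot ≠ [] := by simp [hblrotdef]
  set z := blrot.getLast hblrot_ne with hzdef
  have hzbl : z ∈ bl := hblrot_perm.mem_iff.mp (List.getLast_mem hblrot_ne)
  set blnew := blrot ++ L with hblnewdef
  have hblnewform : blnew.formPerm = blrot.formPerm * ((z :: L).formPerm) :=
    formPerm_append_getLast blrot L hblrot_ne
  set LAnew := blnew :: rest with hLAnewdef
  set LBnew := L.reverse :: LB with hLBnewdef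
  have hpw_cons : (bl :: rest).Pairwise List.Disjoint :=
    (hpermLA.pairwise_iff (fun hd => hd.symm)).mp hpwA
  have hdisj_bl_rest : ∀ bl' ∈ rest, bl.Disjoint bl' :=
    (List.pairwise_cons.mp hpw_cons).1
  -- τ₁ decomposition
  have hτ1 : blocksProd LA = bl.formPerm * blocksProd rest := by
    rw [blocksProd_def, blocksProd_def,
      List.Perm.prod_eq' (hpermLA.map List.formPerm) (pairwise_commute_formPerm hpwA),
      List.map_cons, List.prod_cons]
  have hzL_disj_rest : ∀ bl' ∈ rest, (z :: L).Disjoint bl' := by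
    intro bl' hbl' t ht htbl'
    rcases List.mem_cons.mp ht with rfl | htL
    · exact hdisj_bl_rest bl' hbl' hzbl htbl'
    · exact hLfreshA t htL (List.mem_flatten.mpr ⟨bl', hrest_sub bl' hbl', htbl'⟩)
  have hρ_disj_rest : ((z :: L).formPerm).Disjoint (blocksProd rest) :=
    disjoint_formPerm_prod hzL_disj_rest
  have hτ1new : blocksProd LAnew = blocksProd LA * (z :: L).formPerm := by
    rw [hτ1]
    rw [blocksProd_def, hLAnewdef, List.map_cons, List.prod_cons, hblnewform, hblrotform,
      mul_assoc, mul_assoc]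
    congr 1
    exact hρ_disj_rest.commute.eq
  have hτ2new : blocksProd LBnew = (L.formPerm)⁻¹ * blocksProd LB := by
    rw [blocksProd_def, hLBnewdef, List.map_cons, List.prod_cons, List.formPerm_reverse]
    rfl
  have hρχ : (z :: L).formPerm * (L.formPerm)⁻¹ = Equiv.swap z x₁ := by
    rw [hL', List.formPerm_cons_cons]
    exact mul_inv_cancel_right _ _
  have hτ1z : blocksProd LA z = y := by
    rw [hτ1, Equiv.Perm.mul_apply, blocksProd_def,
      prod_formPerm_apply_of_fix _ z (fun bl' hbl' hc => hzL_disj_rest bl' hbl'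
        List.mem_cons_self hc)]
    rw [← hblrotform, hblrotdef]
    exact List.formPerm_apply_getLast y (v ++ u)
  have hτ1x₁ : blocksProd LA x₁ = x₁ := by
    rw [blocksProd_def]
    exact prod_formPerm_apply_of_fix _ _ (fun l hl hx =>
      hLfreshA x₁ hx₁L (List.mem_flatten.mpr ⟨l, hl, hx⟩))
  have hswapconj : blocksProd LA * Equiv.swap z x₁ = Equiv.swap y x₁ * blocksProd LA := by
    have hsw := Equiv.swap_apply_apply (blocksProd LA) z x₁
    rw [hτ1z, hτ1x₁] at hsw
    rw [hsw]
    group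
  have hprodnew : blocksProd LAnew * blocksProd LBnew * Snew.formPerm = 1 := by
    rw [hτ1new, hτ2new, hSnewform]
    calc blocksProd LA * (z :: L).formPerm * ((L.formPerm)⁻¹ * blocksProd LB) *
          (S.formPerm * Equiv.swap y x₁)
        = (blocksProd LA * ((z :: L).formPerm * (L.formPerm)⁻¹)) *
          (blocksProd LB * S.formPerm) * Equiv.swap y x₁ := by group
      _ = (Equiv.swap y x₁ * blocksProd LA) * (blocksProd LB * S.formPerm) *
          Equiv.swap y x₁ := by rw [hρχ, hswapconj]
      _ = Equiv.swap y x₁ * (blocksProd LA * blocksProd LB * S.formPerm) *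
          Equiv.swap y x₁ := by group
      _ = 1 := by rw [h11, mul_one, Equiv.swap_mul_self]
  -- flatten facts
  have hflatA_perm : LAnew.flatten ~ L ++ LA.flatten := by
    rw [hLAnewdef, List.flatten_cons, hblnewdef]
    calc (blrot ++ L) ++ rest.flatten
        ~ (L ++ blrot) ++ rest.flatten :=
          (List.perm_append_comm).append_right _
      _ = L ++ (blrot ++ rest.flatten) := by rw [List.append_assoc]
      _ ~ L ++ (bl ++ rest.flatten) :=
          (hblrot_perm.append_right _).append_left L
      _ = L ++ (bl :: rest).flatten := by rw [List.flatten_cons]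
      _ ~ L ++ LA.flatten := (hpermLA.flatten.symm).append_left L
  have hflatB_perm : LBnew.flatten ~ L ++ LB.flatten := by
    rw [hLBnewdef, List.flatten_cons]
    exact (List.reverse_perm L).append_right _
  have hLdisjA : L.Disjoint LA.flatten := fun t ht htc => hLfreshA t ht htc
  have hLdisjB : L.Disjoint LB.flatten := fun t ht htc => hLfreshB t ht htc
  refine ⟨LAnew, LBnew, Snew, ?_, ?_, ?_, ?_, ?_, ?_, ?_, ?_, ?_, ?_, ?_, ?_⟩
  · -- lengths A
    have hlenblnew : blnew.length = a + k := by
      rw [hblnewdef, List.length_append, hblrot_perm.length_eq, hbllen, hLlen]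
    have hcoe : (↑(LA.map List.length) : Multiset ℕ) =
        ↑((bl :: rest).map List.length) :=
      Multiset.coe_eq_coe.mpr (hpermLA.map _)
    have hAeq : A = a ::ₘ ↑(rest.map List.length) := by
      rw [← h1, hcoe, List.map_cons, hbllen, ← Multiset.cons_coe]
    rw [hLAnewdef, List.map_cons, hlenblnew, ← Multiset.cons_coe]
    congr 1
    rw [hAeq, Multiset.erase_cons_head]
  · -- lengths B
    rw [hLBnewdef, List.map_cons, List.length_reverse, hLlen, ← Multiset.cons_coe, h2]
  · -- nodup A
    exact hflatA_perm.nodup_iff.mpr (List.Nodup.append hLnodup h3 hLdisjA)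
  · -- nodup B
    exact hflatB_perm.nodup_iff.mpr (List.Nodup.append hLnodup h4 hLdisjB)
  · -- membership A
    intro x
    rw [hflatA_perm.mem_iff, List.mem_append, hLmem, h5]
    omega
  · -- membership B
    intro x
    rw [hflatB_perm.mem_iff, List.mem_append, hLmem, h6]
    omega
  · -- [] ∉ LAnew
    intro hc
    rcases List.mem_cons.mp hc with hc | hc
    · rw [hblnewdef, hblrotdef] at hc
      simp at hc
    · exact h7 (hrest_sub [] hc)
  · -- [] ∉ LBnew
    intro hc
    rcases List.mem_cons.mp hc with hc | hc
    · exact hLne (by simpa using hc.symm)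
    · exact h8 hc
  · exact hSnewnodup
  · -- bounds for Snew
    intro x hx
    rcases hSnewbound x hx with hlt | rfl
    · omega
    · exact hx₁n.2
  · exact hprodnew
  · -- final disjunct
    refine Or.inr ⟨hSnewlen2, ?_, ?_, ?_⟩
    · have hLAnewlen : LAnew.length = LA.length := by
        rw [hLAnewdef, List.length_cons, hrestdef, hLAdecomp]
        simp
        omega
      have hLBnewlen : LBnew.length = LB.length + 1 := by
        rw [hLBnewdef, List.length_cons]
      rw [hLAnewlen, hLBnewlen]
      exact hSnewlen
    · intro bl' hbl'
      rcases List.mem_cons.mp hbl' with rfl | hbl'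
      · exact ⟨y, hySnew, by rw [hblnewdef, hblrotdef]; simp⟩
      · exact hmeetsRest bl' hbl'
    · intro bl' hbl'
      rcases List.mem_cons.mp hbl' with rfl | hbl'
      · exact ⟨x₁, hx₁Snew, List.mem_reverse.mpr hx₁L⟩
      · exact hmeetsB bl' hbl'

lemma works_attachB {d n : ℕ} {A B : Multiset ℕ} {b k : ℕ} (hdk : n + k ≤ d)
    (hb : b ∈ B) (hk : 0 < k) (h : Works d n A B) :
    Works d (n + k) (k ::ₘ A) ((b + k) ::ₘ B.erase b) :=
  works_symm (works_attachA hdk hb hk (works_symm h))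

inductive Buildable : Multiset ℕ → Multiset ℕ → Prop
  | base (n : ℕ) (hn : 0 < n) : Buildable {n} {n}
  | attachA {A B : Multiset ℕ} (a k : ℕ) (ha : a ∈ A) (hk : 0 < k) (h : Buildable A B) :
      Buildable ((a + k) ::ₘ A.erase a) (k ::ₘ B)
  | attachB {A B : Multiset ℕ} (b k : ℕ) (hb : b ∈ B) (hk : 0 < k) (h : Buildable A B) :
      Buildable (k ::ₘ A) ((b + k) ::ₘ B.erase b)

lemma Buildable.sum_eq {A B : Multiset ℕ} (h : Buildable A B) : A.sum = B.sum := by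
  induction h with
  | base n hn => rfl
  | attachA a k ha hk h ih =>
    rw [Multiset.sum_cons, Multiset.sum_cons]
    have := Multiset.sum_erase ha
    omega
  | attachB b k hb hk h ih =>
    rw [Multiset.sum_cons, Multiset.sum_cons]
    have := Multiset.sum_erase hb
    omega

lemma works_base {d n : ℕ} (hn : 0 < n) (hnd : n ≤ d) :
    Works d n {n} {n} := by
  have h0 : 0 + n ≤ d := by omega
  set R := freshList d 0 n h0 with hRdef
  have hRlen : R.length = n := freshList_length d 0 n h0
  have hRnodup : R.Nodup := freshList_nodup d 0 n h0
  have hRmem : ∀ x : Fin d, x ∈ R ↔ 0 ≤ (x : ℕ) ∧ (x : ℕ) < 0 + n := mem_freshList_iff d 0 n h0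
  have hRne : R ≠ [] := freshList_ne_nil d 0 n h0 hn
  refine ⟨[R], [R.reverse], [], ?_, ?_, ?_, ?_, ?_, ?_, ?_, ?_, ?_, ?_, ?_, ?_⟩
  · simp [hRlen]
  · simp [hRlen]
  · simpa using hRnodup
  · simpa using List.nodup_reverse.mpr hRnodup
  · intro x
    simp only [List.flatten_cons, List.flatten_nil, List.append_nil]
    rw [hRmem]
    omega
  · intro x
    simp only [List.flatten_cons, List.flatten_nil, List.append_nil, List.mem_reverse]
    rw [hRmem]
    omega
  · simpa using hRne.symm
  · simpa using fun hc => hRne (by simpa using hc)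
  · simp
  · simp
  · simp only [blocksProd_def, List.map_cons, List.map_nil, List.prod_cons, List.prod_nil,
      mul_one, List.formPerm_nil, List.formPerm_reverse]
    group
  · exact Or.inl ⟨rfl, rfl, rfl⟩

lemma works_of_buildable {A B : Multiset ℕ} (h : Buildable A B) :
    ∀ d : ℕ, A.sum ≤ d → Works d A.sum A B := by
  induction h with
  | base n hn =>
    intro d hd
    have : ({n} : Multiset ℕ).sum = n := by simp
    rw [this]
    exact works_base hn (by omega)
  | @attachA A B a k ha hk h ih =>
    intro d hd
    have hsum : ((a + k) ::ₘ A.erase a).sum = A.sum + k := by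
      rw [Multiset.sum_cons]
      have := Multiset.sum_erase ha
      omega
    rw [hsum] at hd ⊢
    exact works_attachA hd ha hk (ih d (by omega))
  | @attachB A B b k hb hk h ih =>
    intro d hd
    have hsum : (k ::ₘ A).sum = A.sum + k := by
      rw [Multiset.sum_cons]; omega
    rw [hsum] at hd ⊢
    exact works_attachB hd hb hk (ih d (by omega))



/-! ## Layer 1 : existence of a buildable pair -/

lemma Buildable.symm {A B : Multiset ℕ} (h : Buildable A B) : Buildable B A := by
  induction h with
  | base n hn => exact .base n hn
  | attachA a k ha hk h ih => exact .attachB a k ha hk ih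
  | attachB b k hb hk h ih => exact .attachA b k hb hk ih

lemma step_lemma {A B : Multiset ℕ} {a μ : ℕ} (haA : a ∈ A) (hμB : μ ∈ B) (hμa : μ < a)
    (hμpos : 0 < μ) (hb : Buildable ((a - μ) ::ₘ A.erase a) (B.erase μ)) : Buildable A B := by
  have h := Buildable.attachA (a - μ) μ (Multiset.mem_cons_self _ _) hμpos hb
  rw [Multiset.erase_cons_head] at h
  have h1 : a - μ + μ = a := by omega
  rw [h1, Multiset.cons_erase haA, Multiset.cons_erase hμB] at h
  exact h

lemma multiset_exists_min (s : Multiset ℕ) (hs : s ≠ 0) : ∃ μ ∈ s, ∀ x ∈ s, μ ≤ x := by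
  induction s using Multiset.induction with
  | empty => exact absurd rfl hs
  | cons a s ih =>
    by_cases h0 : s = 0
    · subst h0
      exact ⟨a, by simp, by simp⟩
    · obtain ⟨μ, hμs, hμmin⟩ := ih h0
      rcases le_total a μ with hc | hc
      · refine ⟨a, by simp, fun x hx => ?_⟩
        rcases Multiset.mem_cons.mp hx with rfl | hx
        · omega
        · exact le_trans hc (hμmin x hx)
      · refine ⟨μ, Multiset.mem_cons_of_mem hμs, fun x hx => ?_⟩
        rcases Multiset.mem_cons.mp hx with rfl | hx
        · omega
        · exact hμmin x hx

lemma arith1 {p q d g μ : ℕ} (hp : 2 ≤ p) (hq : 3 ≤ q) (hg : 0 < g) (hgμ : g ∣ μ)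
    (hcond : (p + q - 2) * g < d) (hfail : d ≤ (p + q - 3) * g + μ)
    (hpμ : p * μ ≤ d) (hqμ : q * μ ≤ d) : False := by
  have hsplit : (p + q - 2) * g = (p + q - 3) * g + g := by
    have h' : p + q - 2 = (p + q - 3) + 1 := by omega
    rw [h', Nat.add_mul, one_mul]
  have hgltμ : g < μ := by
    by_contra hc
    push_neg at hc
    have h1 : d ≤ (p + q - 3) * g + g := le_trans hfail (by omega)
    rw [← hsplit] at h1
    omega
  have h2g : 2 * g ≤ μ := by
    obtain ⟨c, hc⟩ := hgμ
    rcases c with _ | _ | c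
    · simp at hc; omega
    · simp at hc; omega
    · have hx : g * (c + 2) = g * c + 2 * g := by ring
      rw [hx] at hc
      omega
  have h4 : 2 * ((p + q - 3) * g) ≤ (p + q - 3) * μ :=
    calc 2 * ((p + q - 3) * g) = (p + q - 3) * (2 * g) := by ring
      _ ≤ (p + q - 3) * μ := Nat.mul_le_mul_left _ h2g
  have h7 : (p + q - 3) * μ + 2 * μ = (p + q - 1) * μ := by
    have h' : p + q - 1 = (p + q - 3) + 2 := by omega
    rw [h', Nat.add_mul]
  have h5 : (p + q) * μ ≤ 2 * d := by
    have : (p + q) * μ = p * μ + q * μ := by ring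
    omega
  have h8 : (p + q) * μ ≤ (p + q - 1) * μ := by omega
  have h9 : p + q ≤ p + q - 1 := Nat.le_of_mul_le_mul_right h8 (by omega)
  omega

lemma arith2 {p q e h₁ : ℕ} (hp : 2 ≤ p) (hq : 3 ≤ q) (h₁pos : 0 < h₁)
    (hfail : e ≤ (p + q - 3) * h₁)
    (hA : (p - 1) * (2 * h₁) ≤ e)
    (hB : (q - 1) * (2 * h₁) ≤ e) : False := by
  have h2 : (p - 1) * (2 * h₁) + (q - 1) * (2 * h₁) = (p + q - 2) * (2 * h₁) := by
    rw [← Nat.add_mul]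
    congr 1
    omega
  have h3 : 2 * e ≤ (p + q - 3) * (2 * h₁) := by
    have : (p + q - 3) * (2 * h₁) = 2 * ((p + q - 3) * h₁) := by ring
    omega
  have h4 : (p + q - 2) * (2 * h₁) ≤ (p + q - 3) * (2 * h₁) := by omega
  have h5 := Nat.le_of_mul_le_mul_right h4 (by omega : 0 < 2 * h₁)
  omega


/-- The crux step: removing the globally minimal part (living in `B`). -/
lemma crux_step {N : ℕ}
    (ih : ∀ A B : Multiset ℕ, Multiset.card A + Multiset.card B ≤ N →
      (∀ x ∈ A, 0 < x) → (∀ x ∈ B, 0 < x) → A.sum = B.sum → A ≠ 0 → B ≠ 0 →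
      (Multiset.card A = 1 ∨ Multiset.card B = 1 ∨
        (Multiset.card A + Multiset.card B - 2) * (A + B).gcd < A.sum) →
      Buildable A B)
    (A B : Multiset ℕ) (hN : Multiset.card A + Multiset.card B ≤ N + 1)
    (hA : ∀ x ∈ A, 0 < x) (hB : ∀ x ∈ B, 0 < x) (hsum : A.sum = B.sum)
    (hp2 : 2 ≤ Multiset.card A) (hq2 : 2 ≤ Multiset.card B)
    (hcond : (Multiset.card A + Multiset.card B - 2) * (A + B).gcd < A.sum)
    (μ : ℕ) (hμmin : ∀ x ∈ A + B, μ ≤ x) (hμB : μ ∈ B)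
    (hAbig : ∃ x ∈ A, μ < x) : Buildable A B := by
  classical
  set p := Multiset.card A with hpdef
  set q := Multiset.card B with hqdef
  set d := A.sum with hddef
  set G := (A + B).gcd with hGdef
  have hμpos : 0 < μ := hB μ hμB
  have hGdvd : ∀ x ∈ A + B, G ∣ x := fun x hx => Multiset.gcd_dvd hx
  have hGpos : 0 < G := by
    rcases Nat.eq_zero_or_pos G with h0 | h
    · exfalso
      have := (Multiset.gcd_eq_zero_iff (A + B)).mp h0 μ (Multiset.mem_add.mpr (Or.inr hμB))
      omega
    · exact h
  have hGμ : G ∣ μ := hGdvd μ (Multiset.mem_add.mpr (Or.inr hμB))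
  set E := (B.erase μ).sum with hEdef
  have hEμ : μ + E = d := by
    rw [hEdef, hsum]
    exact Multiset.sum_erase hμB
  have hcardBe : Multiset.card (B.erase μ) = q - 1 := by
    rw [Multiset.card_erase_of_mem hμB, Nat.pred_eq_sub_one]
  have hrec : ∀ a ∈ A, μ < a →
      (Multiset.card B = 2 ∨
        (p + q - 3) * ((((a - μ) ::ₘ A.erase a) + B.erase μ).gcd) < E) →
      Buildable A B := by
    intro a haA hμa hok
    refine step_lemma haA hμB hμa hμpos ?_
    have hsumA' : ((a - μ) ::ₘ A.erase a).sum = E := by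
      have h1 : a + (A.erase a).sum = A.sum := Multiset.sum_erase haA
      rw [Multiset.sum_cons]
      omega
    have hcards : Multiset.card ((a - μ) ::ₘ A.erase a) = p := by
      rw [Multiset.card_cons, Multiset.card_erase_of_mem haA, Nat.pred_eq_sub_one]
      omega
    refine ih _ _ ?_ ?_ ?_ ?_ ?_ ?_ ?_
    · rw [hcards, hcardBe]; omega
    · intro x hx
      rcases Multiset.mem_cons.mp hx with rfl | hx
      · omega
      · exact hA x (Multiset.mem_of_mem_erase hx)
    · intro x hx
      exact hB x (Multiset.mem_of_mem_erase hx)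
    · exact hsumA'
    · rw [← Multiset.card_pos, hcards]; omega
    · rw [← Multiset.card_pos, hcardBe]; omega
    · rcases hok with hq2' | hineq
      · refine Or.inr (Or.inl ?_)
        rw [hcardBe]
        omega
      · refine Or.inr (Or.inr ?_)
        rw [hcards, hcardBe, hsumA']
        have h3 : p + (q - 1) - 2 = p + q - 3 := by omega
        rw [h3]
        exact hineq
  by_cases hq2' : Multiset.card B = 2
  · obtain ⟨a, haA, hμa⟩ := hAbig
    exact hrec a haA hμa (Or.inl hq2')
  · have hq3 : 3 ≤ q := by omega
    by_cases hgood : ∃ a ∈ A, μ < a ∧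
        (p + q - 3) * ((((a - μ) ::ₘ A.erase a) + B.erase μ).gcd) < E
    · obtain ⟨a, haA, hμa, hineq⟩ := hgood
      exact hrec a haA hμa (Or.inr hineq)
    · exfalso
      push_neg at hgood
      obtain ⟨a₁, ha₁A, hμa₁⟩ := hAbig
      set g₁ := ((((a₁ - μ) ::ₘ A.erase a₁) + B.erase μ).gcd) with hg₁def
      have hfail₁ : E ≤ (p + q - 3) * g₁ := hgood a₁ ha₁A hμa₁
      have hgdvd : ∀ a ∈ A, ∀ x ∈ ((a - μ) ::ₘ A.erase a) + B.erase μ,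
          ((((a - μ) ::ₘ A.erase a) + B.erase μ).gcd) ∣ x :=
        fun a _ x hx => Multiset.gcd_dvd hx
      have hGdvdg : ∀ a ∈ A, G ∣ ((((a - μ) ::ₘ A.erase a) + B.erase μ).gcd) := by
        intro a haA
        rw [Multiset.dvd_gcd]
        intro x hx
        rcases Multiset.mem_add.mp hx with hx | hx
        · rcases Multiset.mem_cons.mp hx with rfl | hx
          · exact Nat.dvd_sub (hGdvd a (Multiset.mem_add.mpr (Or.inl haA))) hGμ
          · exact hGdvd x (Multiset.mem_add.mpr (Or.inl (Multiset.mem_of_mem_erase hx)))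
        · exact hGdvd x (Multiset.mem_add.mpr (Or.inr (Multiset.mem_of_mem_erase hx)))
      have harith1 : ∀ a ∈ A, μ < a →
          ((((a - μ) ::ₘ A.erase a) + B.erase μ).gcd) = G → False := by
        intro a haA hμa hgG
        have hfail := hgood a haA hμa
        rw [hgG] at hfail
        have hpμ : p * μ ≤ d := by
          have h' := Multiset.card_nsmul_le_sum
            (fun x hx => hμmin x (Multiset.mem_add.mpr (Or.inl hx)) : ∀ x ∈ A, μ ≤ x)
          rw [smul_eq_mul] at h'
          exact h'
        have hqμ : q * μ ≤ d := by
          have h' := Multiset.card_nsmul_le_sum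
            (fun x hx => hμmin x (Multiset.mem_add.mpr (Or.inr hx)) : ∀ x ∈ B, μ ≤ x)
          rw [smul_eq_mul] at h'
          rw [hsum]
          exact h'
        exact arith1 hp2 hq3 hGpos hGμ hcond (by omega) hpμ hqμ
      have hg₁dvd1 : ∀ x ∈ A.erase a₁, g₁ ∣ x := fun x hx =>
        hgdvd a₁ ha₁A x (Multiset.mem_add.mpr (Or.inl (Multiset.mem_cons_of_mem hx)))
      have hg₁dvdsub : g₁ ∣ a₁ - μ :=
        hgdvd a₁ ha₁A _ (Multiset.mem_add.mpr (Or.inl (Multiset.mem_cons_self _ _)))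
      have hg₁dvdB : ∀ x ∈ B.erase μ, g₁ ∣ x := fun x hx =>
        hgdvd a₁ ha₁A x (Multiset.mem_add.mpr (Or.inr hx))
      have hGdvdg₁ : G ∣ g₁ := hGdvdg a₁ ha₁A
      have hg₁ne : g₁ ≠ G := fun hc => harith1 a₁ ha₁A hμa₁ hc
      have hBene : B.erase μ ≠ 0 := by
        rw [← Multiset.card_pos, hcardBe]; omega
      obtain ⟨x₀, hx₀⟩ := Multiset.exists_mem_of_ne_zero hBene
      have hg₁pos : 0 < g₁ :=
        Nat.pos_of_dvd_of_pos (hg₁dvdB x₀ hx₀) (hB x₀ (Multiset.mem_of_mem_erase hx₀))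
      by_cases h2nd : ∃ a₂ ∈ A.erase a₁, μ < a₂
      · obtain ⟨a₂, ha₂e, hμa₂⟩ := h2nd
        have ha₂A : a₂ ∈ A := Multiset.mem_of_mem_erase ha₂e
        have ha₁e : a₁ ∈ A.erase a₂ := by
          by_cases hne : a₁ = a₂
          · subst hne
            exact ha₂e
          · exact (Multiset.mem_erase_of_ne hne).mpr ha₁A
        set g₂ := ((((a₂ - μ) ::ₘ A.erase a₂) + B.erase μ).gcd) with hg₂def
        have hfail₂ : E ≤ (p + q - 3) * g₂ := hgood a₂ ha₂A hμa₂
        have hg₂dvd1 : ∀ x ∈ A.erase a₂, g₂ ∣ x := fun x hx =>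
          hgdvd a₂ ha₂A x (Multiset.mem_add.mpr (Or.inl (Multiset.mem_cons_of_mem hx)))
        have hg₂dvdsub : g₂ ∣ a₂ - μ :=
          hgdvd a₂ ha₂A _ (Multiset.mem_add.mpr (Or.inl (Multiset.mem_cons_self _ _)))
        have hg₂dvdB : ∀ x ∈ B.erase μ, g₂ ∣ x := fun x hx =>
          hgdvd a₂ ha₂A x (Multiset.mem_add.mpr (Or.inr hx))
        have hGdvdg₂ : G ∣ g₂ := hGdvdg a₂ ha₂A
        have hg₂ne : g₂ ≠ G := fun hc => harith1 a₂ ha₂A hμa₂ hc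
        have hg₂pos : 0 < g₂ :=
          Nat.pos_of_dvd_of_pos (hg₂dvdB x₀ hx₀) (hB x₀ (Multiset.mem_of_mem_erase hx₀))
        -- e := gcd g₁ g₂ equals G
        have hedvda₁ : Nat.gcd g₁ g₂ ∣ a₁ :=
          (Nat.gcd_dvd_right g₁ g₂).trans (hg₂dvd1 a₁ ha₁e)
        have hedvdμ : Nat.gcd g₁ g₂ ∣ μ := by
          have h1 : Nat.gcd g₁ g₂ ∣ a₁ - μ := (Nat.gcd_dvd_left g₁ g₂).trans hg₁dvdsub
          have h2 : a₁ - (a₁ - μ) = μ := by omega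
          exact h2 ▸ Nat.dvd_sub hedvda₁ h1
        have hedvdall : ∀ x ∈ A + B, Nat.gcd g₁ g₂ ∣ x := by
          intro x hx
          rcases Multiset.mem_add.mp hx with hx | hx
          · by_cases hx1 : x = a₁
            · subst hx1; exact hedvda₁
            · exact (Nat.gcd_dvd_left g₁ g₂).trans
                (hg₁dvd1 x ((Multiset.mem_erase_of_ne hx1).mpr hx))
          · by_cases hxμ : x = μ
            · subst hxμ; exact hedvdμ
            · exact (Nat.gcd_dvd_left g₁ g₂).trans
                (hg₁dvdB x ((Multiset.mem_erase_of_ne hxμ).mpr hx))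
        have heG : Nat.gcd g₁ g₂ = G :=
          Nat.dvd_antisymm (Multiset.dvd_gcd.mpr hedvdall)
            (Nat.dvd_gcd hGdvdg₁ hGdvdg₂)
        have h2G₁ : 2 * G ≤ g₁ := by
          obtain ⟨c, hc⟩ := hGdvdg₁
          rcases c with _ | _ | c
          · simp at hc; omega
          · simp at hc; omega
          · have hx : G * (c + 2) = G * c + 2 * G := by ring
            rw [hx] at hc
            omega
        have h2G₂ : 2 * G ≤ g₂ := by
          obtain ⟨c, hc⟩ := hGdvdg₂
          rcases c with _ | _ | c
          · simp at hc; omega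
          · simp at hc; omega
          · have hx : G * (c + 2) = G * c + 2 * G := by ring
            rw [hx] at hc
            omega
        set l := Nat.lcm g₁ g₂ with hldef
        have hgl : G * l = g₁ * g₂ := by
          rw [← heG, hldef]
          exact Nat.gcd_mul_lcm g₁ g₂
        have hl2g₁ : 2 * g₁ ≤ l := by
          have h1 : G * (2 * g₁) ≤ G * l := by
            rw [hgl]
            calc G * (2 * g₁) = (2 * G) * g₁ := by ring
              _ ≤ g₂ * g₁ := Nat.mul_le_mul_right _ h2G₂
              _ = g₁ * g₂ := by ring
          exact Nat.le_of_mul_le_mul_left h1 hGpos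
        -- element bounds
        have hRmem : ∀ x ∈ (A.erase a₁).erase a₂, l ≤ x := by
          intro x hx
          have hx1 : x ∈ A.erase a₁ := Multiset.mem_of_mem_erase hx
          have hx2 : x ∈ A.erase a₂ := by
            rw [Multiset.erase_comm] at hx
            exact Multiset.mem_of_mem_erase hx
          exact Nat.le_of_dvd (hA x (Multiset.mem_of_mem_erase hx1))
            (Nat.lcm_dvd (hg₁dvd1 x hx1) (hg₂dvd1 x hx2))
        have hcardR : Multiset.card ((A.erase a₁).erase a₂) = p - 2 := by
          rw [Multiset.card_erase_of_mem ha₂e, Multiset.card_erase_of_mem ha₁A,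
            Nat.pred_eq_sub_one, Nat.pred_eq_sub_one]
          omega
        have hRsumge : (p - 2) * l ≤ ((A.erase a₁).erase a₂).sum := by
          have h' := Multiset.card_nsmul_le_sum hRmem
          rw [smul_eq_mul, hcardR] at h'
          exact h'
        have hsum1 : a₂ + ((A.erase a₁).erase a₂).sum = (A.erase a₁).sum :=
          Multiset.sum_erase ha₂e
        have hsum2 : a₁ + (A.erase a₁).sum = d := Multiset.sum_erase ha₁A
        have ha₂ge : g₁ ≤ a₂ := Nat.le_of_dvd (hA a₂ ha₂A) (hg₁dvd1 a₂ ha₂e)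
        have hAside : (p - 1) * (2 * g₁) ≤ E := by
          have hid : (p - 1) * (2 * g₁) = (p - 2) * (2 * g₁) + 2 * g₁ := by
            have h' : p - 1 = (p - 2) + 1 := by omega
            rw [h', Nat.add_mul, one_mul]
          have hmono : (p - 2) * (2 * g₁) ≤ (p - 2) * l := Nat.mul_le_mul_left _ hl2g₁
          have hμa₁' : g₁ ≤ a₁ - μ := Nat.le_of_dvd (by omega) hg₁dvdsub
          omega
        have hBmem : ∀ x ∈ B.erase μ, l ≤ x := fun x hx =>
          Nat.le_of_dvd (hB x (Multiset.mem_of_mem_erase hx))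
            (Nat.lcm_dvd (hg₁dvdB x hx) (hg₂dvdB x hx))
        have hBside : (q - 1) * (2 * g₁) ≤ E := by
          have h' := Multiset.card_nsmul_le_sum hBmem
          rw [smul_eq_mul, hcardBe] at h'
          have hmono : (q - 1) * (2 * g₁) ≤ (q - 1) * l := Nat.mul_le_mul_left _ hl2g₁
          omega
        exact arith2 hp2 hq3 hg₁pos hfail₁ hAside hBside
      · -- exactly one candidate : all other elements of A equal μ
        push_neg at h2nd
        have hAeμ : ∀ x ∈ A.erase a₁, x = μ := by
          intro x hx
          have h1 := h2nd x hx
          have h2 := hμmin x (Multiset.mem_add.mpr (Or.inl (Multiset.mem_of_mem_erase hx)))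
          omega
        have hAene : A.erase a₁ ≠ 0 := by
          rw [← Multiset.card_pos, Multiset.card_erase_of_mem ha₁A, Nat.pred_eq_sub_one]
          omega
        obtain ⟨x₂, hx₂⟩ := Multiset.exists_mem_of_ne_zero hAene
        have hμAe : μ ∈ A.erase a₁ := hAeμ x₂ hx₂ ▸ hx₂
        have hg₁μ : g₁ ∣ μ := hg₁dvd1 μ hμAe
        have hg₁a₁ : g₁ ∣ a₁ := by
          have h2 : a₁ - μ + μ = a₁ := by omega
          exact h2 ▸ Nat.dvd_add hg₁dvdsub hg₁μ
        have hg₁all : ∀ x ∈ A + B, g₁ ∣ x := by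
          intro x hx
          rcases Multiset.mem_add.mp hx with hx | hx
          · by_cases hx1 : x = a₁
            · subst hx1; exact hg₁a₁
            · exact hg₁dvd1 x ((Multiset.mem_erase_of_ne hx1).mpr hx)
          · by_cases hxμ : x = μ
            · subst hxμ; exact hg₁μ
            · exact hg₁dvdB x ((Multiset.mem_erase_of_ne hxμ).mpr hx)
        have hg₁G : g₁ = G :=
          Nat.dvd_antisymm (Multiset.dvd_gcd.mpr hg₁all) hGdvdg₁
        exact hg₁ne hg₁G

lemma buildable_single : ∀ (N : ℕ) (B : Multiset ℕ), Multiset.card B ≤ N → B ≠ 0 →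
    (∀ x ∈ B, 0 < x) → Buildable {B.sum} B := by
  intro N
  induction N with
  | zero =>
    intro B hN h0 _
    exfalso
    have := Multiset.card_pos.mpr h0
    omega
  | succ N ih =>
    intro B hN h0 hpos
    by_cases h1 : Multiset.card B = 1
    · obtain ⟨b, rfl⟩ := Multiset.card_eq_one.mp h1
      have hs : ({b} : Multiset ℕ).sum = b := by simp
      rw [hs]
      exact .base b (hpos b (Multiset.mem_singleton_self b))
    · obtain ⟨b, hb⟩ := Multiset.exists_mem_of_ne_zero h0
      have hcard : Multiset.card (B.erase b) = Multiset.card B - 1 := by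
        rw [Multiset.card_erase_of_mem hb, Nat.pred_eq_sub_one]
      have hq2 : 2 ≤ Multiset.card B := by
        have := Multiset.card_pos.mpr h0
        omega
      have hB' : B.erase b ≠ 0 := by
        rw [← Multiset.card_pos, hcard]; omega
      have hrec := ih (B.erase b) (by omega) hB'
        (fun x hx => hpos x (Multiset.mem_of_mem_erase hx))
      have h := Buildable.attachA (B.erase b).sum b
        (Multiset.mem_singleton_self _) (hpos b hb) hrec
      rw [Multiset.erase_singleton, Multiset.cons_erase hb] at h
      have hs : (B.erase b).sum + b = B.sum := by
        have := Multiset.sum_erase hb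
        omega
      rw [hs] at h
      exact h

theorem buildable_main : ∀ (N : ℕ) (A B : Multiset ℕ),
    Multiset.card A + Multiset.card B ≤ N →
    (∀ x ∈ A, 0 < x) → (∀ x ∈ B, 0 < x) → A.sum = B.sum → A ≠ 0 → B ≠ 0 →
    (Multiset.card A = 1 ∨ Multiset.card B = 1 ∨
      (Multiset.card A + Multiset.card B - 2) * (A + B).gcd < A.sum) →
    Buildable A B := by
  intro N
  induction N with
  | zero =>
    intro A B hN hA hB hsum hA0 hB0 hcond
    exfalso
    have h1 := Multiset.card_pos.mpr hA0
    have h2 := Multiset.card_pos.mpr hB0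
    omega
  | succ N ih =>
    intro A B hN hA hB hsum hA0 hB0 hcond
    by_cases hp1 : Multiset.card A = 1
    · obtain ⟨m, rfl⟩ := Multiset.card_eq_one.mp hp1
      have hms : ({m} : Multiset ℕ).sum = m := by simp
      have hmB : m = B.sum := by rw [← hsum, hms]
      subst hmB
      exact buildable_single (Multiset.card B) B le_rfl hB0 hB
    · by_cases hq1 : Multiset.card B = 1
      · obtain ⟨m, rfl⟩ := Multiset.card_eq_one.mp hq1
        have hms : ({m} : Multiset ℕ).sum = m := by simp
        have hmA : m = A.sum := by rw [hsum, hms]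
        subst hmA
        exact (buildable_single (Multiset.card A) A le_rfl hA0 hA).symm
      · have hp2 : 2 ≤ Multiset.card A := by
          have := Multiset.card_pos.mpr hA0
          omega
        have hq2 : 2 ≤ Multiset.card B := by
          have := Multiset.card_pos.mpr hB0
          omega
        have hcond' : (Multiset.card A + Multiset.card B - 2) * (A + B).gcd < A.sum := by
          rcases hcond with h | h | h
          · omega
          · omega
          · exact h
        have hcondsym : (Multiset.card B + Multiset.card A - 2) * (B + A).gcd < B.sum := by
          rw [show B + A = A + B from add_comm B A,
            show Multiset.card B + Multiset.card A
              = Multiset.card A + Multiset.card B from by omega, ← hsum]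
          exact hcond'
        have hABne : A + B ≠ 0 := by
          rw [← Multiset.card_pos, Multiset.card_add]
          omega
        obtain ⟨μ, hμmem, hμmin⟩ := multiset_exists_min (A + B) hABne
        have hμminsym : ∀ x ∈ B + A, μ ≤ x := by
          intro x hx
          refine hμmin x ?_
          rw [Multiset.mem_add] at hx ⊢
          tauto
        by_cases hμB : μ ∈ B
        · by_cases hAbig : ∃ x ∈ A, μ < x
          · exact crux_step ih A B hN hA hB hsum hp2 hq2 hcond' μ hμmin hμB hAbig
          · push_neg at hAbig
            have hAeq : ∀ x ∈ A, x = μ := fun x hx =>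
              le_antisymm (hAbig x hx) (hμmin x (Multiset.mem_add.mpr (Or.inl hx)))
            have hμA : μ ∈ A := by
              obtain ⟨x, hx⟩ := Multiset.exists_mem_of_ne_zero hA0
              exact hAeq x hx ▸ hx
            by_cases hBbig : ∃ x ∈ B, μ < x
            · exact (crux_step ih B A (by omega) hB hA hsum.symm hq2 hp2 hcondsym
                μ hμminsym hμA hBbig).symm
            · exfalso
              push_neg at hBbig
              have hμpos : 0 < μ := hA μ hμA
              have hsA : A.sum = Multiset.card A * μ := by
                have hrep : A = Multiset.replicate (Multiset.card A) μ :=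
                  Multiset.eq_replicate.mpr ⟨rfl, hAeq⟩
                calc A.sum = (Multiset.replicate (Multiset.card A) μ).sum := by rw [← hrep]
                  _ = Multiset.card A * μ := by rw [Multiset.sum_replicate, smul_eq_mul]
              have hGμ2 : (A + B).gcd = μ := by
                refine Nat.dvd_antisymm (Multiset.gcd_dvd hμmem) ?_
                rw [Multiset.dvd_gcd]
                intro x hx
                rcases Multiset.mem_add.mp hx with hx | hx
                · rw [hAeq x hx]
                · have hBeq : x = μ :=
                    le_antisymm (hBbig x hx) (hμmin x (Multiset.mem_add.mpr (Or.inr hx)))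
                  rw [hBeq]
              rw [hGμ2, hsA] at hcond'
              have hlt := Nat.lt_of_mul_lt_mul_right hcond'
              omega
        · have hμA : μ ∈ A := by
            rcases Multiset.mem_add.mp hμmem with h | h
            · exact h
            · exact absurd h hμB
          have hBbig : ∃ x ∈ B, μ < x := by
            obtain ⟨x, hx⟩ := Multiset.exists_mem_of_ne_zero hB0
            refine ⟨x, hx, ?_⟩
            have hle := hμmin x (Multiset.mem_add.mpr (Or.inr hx))
            have hne : x ≠ μ := fun hc => hμB (hc ▸ hx)
            omega
          exact (crux_step ih B A (by omega) hB hA hsum.symm hq2 hp2 hcondsym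
            μ hμminsym hμA hBbig).symm


-- helper lemmas for assembly

lemma cycleType_blocksProd {d : ℕ} : ∀ (Ls : List (List (Fin d))), Ls.flatten.Nodup →
    (blocksProd Ls).cycleType = ↑((Ls.map List.length).filter (fun t => 2 ≤ t)) ∧
    (blocksProd Ls).support.card = ((Ls.map List.length).filter (fun t => 2 ≤ t)).sum := by
  intro Ls
  induction Ls with
  | nil =>
    intro _
    constructor
    · simp [blocksProd]
    · simp [blocksProd]
  | cons l Ls ih =>
    intro hnd
    have hnd' := List.nodup_flatten.mp hnd
    have hlnd : l.Nodup := hnd'.1 l (by simp)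
    have hLsnd : Ls.flatten.Nodup := by
      rw [List.flatten_cons] at hnd
      exact (List.nodup_append.mp hnd).2.1
    have hdisjL : ∀ l' ∈ Ls, l.Disjoint l' :=
      fun l' hl' => (List.pairwise_cons.mp hnd'.2).1 l' hl'
    have hdisj : l.formPerm.Disjoint (blocksProd Ls) := disjoint_formPerm_prod hdisjL
    have hprod : blocksProd (l :: Ls) = l.formPerm * blocksProd Ls := by
      rw [blocksProd_def, List.map_cons, List.prod_cons]
      rfl
    obtain ⟨ih1, ih2⟩ := ih hLsnd
    by_cases hlen : 2 ≤ l.length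
    · have hcyc : l.formPerm.IsCycle := List.isCycle_formPerm hlnd hlen
      have hsupp : l.formPerm.support = l.toFinset := by
        refine List.support_formPerm_of_nodup l hlnd ?_
        intro x hc
        rw [hc] at hlen
        simp at hlen
      have hcard : l.formPerm.support.card = l.length := by
        rw [hsupp, List.toFinset_card_of_nodup hlnd]
      constructor
      · rw [hprod, hdisj.cycleType_mul, hcyc.cycleType, hcard, ih1, List.map_cons,
          List.filter_cons_of_pos (by simpa using hlen)]
        rfl
      · rw [hprod, hdisj.card_support_mul, hcard, ih2, List.map_cons,
          List.filter_cons_of_pos (by simpa using hlen), List.sum_cons]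
    · have hform : l.formPerm = 1 := by
        rcases l with _ | ⟨x, _ | ⟨y, t⟩⟩
        · exact List.formPerm_nil
        · exact List.formPerm_singleton x
        · exact absurd (by simp only [List.length_cons]; omega) hlen
      constructor
      · rw [hprod, hform, one_mul, ih1, List.map_cons,
          List.filter_cons_of_neg (by simpa using hlen)]
      · rw [hprod, hform, one_mul, ih2, List.map_cons,
          List.filter_cons_of_neg (by simpa using hlen)]

lemma cyclePartition_aux {M : Multiset ℕ} {d : ℕ} (hpos : ∀ x ∈ M, 0 < x) (hsum : M.sum = d) :
    M.filter (fun t => 2 ≤ t) + Multiset.replicate (d - (M.filter (fun t => 2 ≤ t)).sum) 1 = M := by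
  classical
  have hsplit := Multiset.filter_add_not (fun t => 2 ≤ t) M
  have hrep : M.filter (fun t => ¬ 2 ≤ t) =
      Multiset.replicate (Multiset.card (M.filter (fun t => ¬ 2 ≤ t))) 1 := by
    rw [Multiset.eq_replicate]
    refine ⟨rfl, fun b hb => ?_⟩
    have h1 := Multiset.of_mem_filter hb
    have h2 := hpos b (Multiset.mem_of_mem_filter hb)
    omega
  have hsum2 : (M.filter (fun t => 2 ≤ t)).sum + (M.filter (fun t => ¬ 2 ≤ t)).sum = d := by
    rw [← hsum, ← Multiset.sum_add, hsplit]
  have hsum3 : (M.filter (fun t => ¬ 2 ≤ t)).sum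
      = Multiset.card (M.filter (fun t => ¬ 2 ≤ t)) := by
    rw [hrep, Multiset.sum_replicate, smul_eq_mul, mul_one]
    rw [← hrep]
  have hd : d - (M.filter (fun t => 2 ≤ t)).sum
      = Multiset.card (M.filter (fun t => ¬ 2 ≤ t)) := by omega
  rw [hd, ← hrep, hsplit]

lemma sameCycle_blocksProd {d : ℕ} (Ls : List (List (Fin d))) (hnd : Ls.flatten.Nodup)
    {bl : List (Fin d)} (hbl : bl ∈ Ls) {x s : Fin d} (hx : x ∈ bl) (hs : s ∈ bl) :
    (blocksProd Ls).SameCycle x s := by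
  classical
  by_cases hxs : x = s
  · exact hxs ▸ Equiv.Perm.SameCycle.refl _ _
  obtain ⟨l1, l2, hdecomp⟩ := List.append_of_mem hbl
  have hperm : Ls ~ bl :: (l1 ++ l2) := by rw [hdecomp]; exact List.perm_middle
  have hnd' := List.nodup_flatten.mp hnd
  have hpw := (hperm.pairwise_iff (fun hd => hd.symm)).mp hnd'.2
  have hdisjL : ∀ l' ∈ l1 ++ l2, bl.Disjoint l' := (List.pairwise_cons.mp hpw).1
  have hdisj : bl.formPerm.Disjoint (blocksProd (l1 ++ l2)) := disjoint_formPerm_prod hdisjL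
  have hprodeq : blocksProd Ls = bl.formPerm * blocksProd (l1 ++ l2) := by
    rw [blocksProd_def, blocksProd_def,
      List.Perm.prod_eq' (hperm.map List.formPerm) (pairwise_commute_formPerm hnd'.2),
      List.map_cons, List.prod_cons]
  have hblnd : bl.Nodup := hnd'.1 bl hbl
  have hlen : 2 ≤ bl.length := by
    rcases bl with _ | ⟨u, _ | ⟨w, t⟩⟩
    · simp at hx
    · simp only [List.mem_singleton] at hx hs
      exact absurd (hx.trans hs.symm) hxs
    · simp only [List.length_cons]
      omega
  have hcyc : bl.formPerm.IsCycle := List.isCycle_formPerm hblnd hlen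
  have hsupp : bl.formPerm.support = bl.toFinset := by
    refine List.support_formPerm_of_nodup bl hblnd ?_
    intro w hc
    rw [hc] at hlen
    simp at hlen
  have hmovedx : bl.formPerm x ≠ x := by
    rw [← Equiv.Perm.mem_support, hsupp]
    simpa using hx
  have hmoveds : bl.formPerm s ≠ s := by
    rw [← Equiv.Perm.mem_support, hsupp]
    simpa using hs
  have hsc : bl.formPerm.SameCycle x s := hcyc.sameCycle hmovedx hmoveds
  rw [hprodeq]
  exact sameCycle_mul_of_disjoint hdisj hsc

end BoccaraAux



/-- The cycle partition of a permutation of `Fin d`: the multiset of lengths of its disjoint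
cycles, with fixed points counted as cycles of length `1`. It is a partition of `d`. -/
def cyclePartition {d : ℕ} (g : Equiv.Perm (Fin d)) : Multiset ℕ :=
  g.cycleType + Multiset.replicate (d - g.support.card) 1

/-- Proposition 2.5 (Boccara): the case of three partitions (`l = 1`). -/
theorem boccara_three_partitions (d p q : ℕ) (hd : 0 < d)
    (a : Fin p → ℕ) (b : Fin q → ℕ)
    (ha : ∀ i, 0 < a i) (hb : ∀ j, 0 < b j)
    (hsa : ∑ i, a i = d) (hsb : ∑ j, b j = d)
    (hm : 0 < p + q - 2)
    (hmax : p + q - 2 < d / Nat.gcd (Finset.univ.gcd a) (Finset.univ.gcd b)) :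
    ∃ (τ₁ τ₂ σ₁ : Equiv.Perm (Fin d)),
      τ₁ * τ₂ * σ₁ = 1 ∧
      cyclePartition τ₁ = (List.ofFn a : Multiset ℕ) ∧
      cyclePartition τ₂ = (List.ofFn b : Multiset ℕ) ∧
      σ₁.IsCycle ∧ σ₁.support.card = (p + q - 2) + 1 ∧
      (∀ x y : Fin d, ∃ g ∈ Subgroup.closure {τ₁, τ₂, σ₁}, g x = y) := by
  classical
  have hcardA : Multiset.card (↑(List.ofFn a) : Multiset ℕ) = p := by
    rw [Multiset.coe_card, List.length_ofFn]
  have hcardB : Multiset.card (↑(List.ofFn b) : Multiset ℕ) = q := by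
    rw [Multiset.coe_card, List.length_ofFn]
  have hsumA : (↑(List.ofFn a) : Multiset ℕ).sum = d := by
    rw [Multiset.sum_coe, List.sum_ofFn]; exact hsa
  have hsumB : (↑(List.ofFn b) : Multiset ℕ).sum = d := by
    rw [Multiset.sum_coe, List.sum_ofFn]; exact hsb
  have hposA : ∀ x ∈ (↑(List.ofFn a) : Multiset ℕ), 0 < x := by
    intro x hx
    rw [Multiset.mem_coe] at hx
    obtain ⟨i, hi⟩ := List.mem_ofFn.mp hx
    rw [← hi]; exact ha i
  have hposB : ∀ x ∈ (↑(List.ofFn b) : Multiset ℕ), 0 < x := by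
    intro x hx
    rw [Multiset.mem_coe] at hx
    obtain ⟨i, hi⟩ := List.mem_ofFn.mp hx
    rw [← hi]; exact hb i
  have hAne : (↑(List.ofFn a) : Multiset ℕ) ≠ 0 := by
    intro hc
    rw [hc] at hsumA
    simp at hsumA
    omega
  have hBne : (↑(List.ofFn b) : Multiset ℕ) ≠ 0 := by
    intro hc
    rw [hc] at hsumB
    simp at hsumB
    omega
  have hp1 : 1 ≤ p := by
    have := Multiset.card_pos.mpr hAne
    omega
  have hq1 : 1 ≤ q := by
    have := Multiset.card_pos.mpr hBne
    omega
  -- gcd facts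
  have hgcdA : (↑(List.ofFn a) : Multiset ℕ).gcd = Finset.univ.gcd a := by
    rw [Finset.gcd_def, Fin.univ_def, Multiset.map_coe, ← List.ofFn_eq_map]
  have hgcdB : (↑(List.ofFn b) : Multiset ℕ).gcd = Finset.univ.gcd b := by
    rw [Finset.gcd_def, Fin.univ_def, Multiset.map_coe, ← List.ofFn_eq_map]
  have hG : ((↑(List.ofFn a) : Multiset ℕ) + ↑(List.ofFn b)).gcd
      = Nat.gcd (Finset.univ.gcd a) (Finset.univ.gcd b) := by
    rw [Multiset.gcd_add, hgcdA, hgcdB]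
    rfl
  have hGdvdd : ((↑(List.ofFn a) : Multiset ℕ) + ↑(List.ofFn b)).gcd ∣ d := by
    rw [← hsumA]
    exact Multiset.dvd_sum (fun x hx =>
      Multiset.gcd_dvd (Multiset.mem_add.mpr (Or.inl hx)))
  have hcond : (p + q - 2) * ((↑(List.ofFn a) : Multiset ℕ) + ↑(List.ofFn b)).gcd < d := by
    have h1 : (p + q - 2) + 1 ≤ d / ((↑(List.ofFn a) : Multiset ℕ) + ↑(List.ofFn b)).gcd := by
      rw [hG]; omega
    have h2 := Nat.mul_le_mul_right (((↑(List.ofFn a) : Multiset ℕ) + ↑(List.ofFn b)).gcd) h1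
    rw [Nat.div_mul_cancel hGdvdd] at h2
    have hGpos : 0 < ((↑(List.ofFn a) : Multiset ℕ) + ↑(List.ofFn b)).gcd := by
      rcases Nat.eq_zero_or_pos (((↑(List.ofFn a) : Multiset ℕ) + ↑(List.ofFn b)).gcd)
        with h0 | h
      · rw [h0] at hGdvdd
        have := Nat.eq_zero_of_zero_dvd hGdvdd
        omega
      · exact h
    have h3 : ((p + q - 2) + 1) * ((↑(List.ofFn a) : Multiset ℕ) + ↑(List.ofFn b)).gcd
        = (p + q - 2) * ((↑(List.ofFn a) : Multiset ℕ) + ↑(List.ofFn b)).gcd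
          + ((↑(List.ofFn a) : Multiset ℕ) + ↑(List.ofFn b)).gcd := by ring
    omega
  -- build
  have hbuild : Buildable (↑(List.ofFn a)) (↑(List.ofFn b)) := by
    refine buildable_main (p + q) _ _ (by omega) hposA hposB (hsumA.trans hsumB.symm)
      hAne hBne (Or.inr (Or.inr ?_))
    rw [hcardA, hcardB, hsumA]
    exact hcond
  have hworks : Works d d (↑(List.ofFn a)) (↑(List.ofFn b)) := by
    have h := works_of_buildable hbuild d (le_of_eq hsumA)
    rw [hsumA] at h
    exact h
  obtain ⟨LA, LB, S, h1, h2, h3, h4, h5, h6, h7, h8, h9, h10, h11, h12⟩ := hworks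
  have hLAlen : LA.length = p := by
    have hcc : Multiset.card (↑(LA.map List.length) : Multiset ℕ)
        = Multiset.card (↑(List.ofFn a) : Multiset ℕ) := by rw [h1]
    rw [Multiset.coe_card, List.length_map, hcardA] at hcc
    exact hcc
  have hLBlen : LB.length = q := by
    have hcc : Multiset.card (↑(LB.map List.length) : Multiset ℕ)
        = Multiset.card (↑(List.ofFn b) : Multiset ℕ) := by rw [h2]
    rw [Multiset.coe_card, List.length_map, hcardB] at hcc
    exact hcc
  rcases h12 with ⟨hS0, hA1, hB1⟩ | ⟨hS2, hSlen, hSA, hSB⟩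
  · exfalso
    rw [hLAlen] at hA1
    rw [hLBlen] at hB1
    omega
  have hSlength : S.length = p + q - 1 := by
    rw [hLAlen, hLBlen] at hSlen
    omega
  have hScard : S.formPerm.support.card = S.length := by
    rw [List.support_formPerm_of_nodup S h9 (fun x hc => by rw [hc] at hS2; simp at hS2),
      List.toFinset_card_of_nodup h9]
  refine ⟨blocksProd LA, blocksProd LB, S.formPerm, h11, ?_, ?_, ?_, ?_, ?_⟩
  · obtain ⟨hct, hsc⟩ := cycleType_blocksProd LA h3
    unfold cyclePartition
    rw [hct, hsc]
    have hMf : (↑((LA.map List.length).filter (fun t => 2 ≤ t)) : Multiset ℕ)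
        = Multiset.filter (fun t => 2 ≤ t) (↑(List.ofFn a)) := by
      rw [← h1, Multiset.filter_coe]
    have hMs : ((LA.map List.length).filter (fun t => 2 ≤ t)).sum
        = (Multiset.filter (fun t => 2 ≤ t) (↑(List.ofFn a) : Multiset ℕ)).sum := by
      rw [← hMf, Multiset.sum_coe]
    rw [hMf, hMs]
    exact cyclePartition_aux hposA hsumA
  · obtain ⟨hct, hsc⟩ := cycleType_blocksProd LB h4
    unfold cyclePartition
    rw [hct, hsc]
    have hMf : (↑((LB.map List.length).filter (fun t => 2 ≤ t)) : Multiset ℕ)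
        = Multiset.filter (fun t => 2 ≤ t) (↑(List.ofFn b)) := by
      rw [← h2, Multiset.filter_coe]
    have hMs : ((LB.map List.length).filter (fun t => 2 ≤ t)).sum
        = (Multiset.filter (fun t => 2 ≤ t) (↑(List.ofFn b) : Multiset ℕ)).sum := by
      rw [← hMf, Multiset.sum_coe]
    rw [hMf, hMs]
    exact cyclePartition_aux hposB hsumB
  · exact List.isCycle_formPerm h9 hS2
  · rw [hScard, hSlength]
    omega
  · intro x y
    have hx : x ∈ LA.flatten := (h5 x).mpr x.isLt
    have hy : y ∈ LA.flatten := (h5 y).mpr y.isLt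
    obtain ⟨blx, hblx, hxblx⟩ := List.mem_flatten.mp hx
    obtain ⟨bly, hbly, hybly⟩ := List.mem_flatten.mp hy
    obtain ⟨sx, hsxS, hsxbl⟩ := hSA blx hblx
    obtain ⟨sy, hsyS, hsybl⟩ := hSA bly hbly
    obtain ⟨i, hi⟩ := sameCycle_blocksProd LA h3 hblx hxblx hsxbl
    obtain ⟨k, hk⟩ := sameCycle_blocksProd LA h3 hbly hybly hsybl
    have hsupS : S.formPerm.support = S.toFinset :=
      List.support_formPerm_of_nodup S h9 (fun w hc => by rw [hc] at hS2; simp at hS2)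
    have hsc : S.formPerm.SameCycle sx sy := by
      by_cases hxy : sx = sy
      · exact hxy ▸ Equiv.Perm.SameCycle.refl _ _
      · refine (List.isCycle_formPerm h9 hS2).sameCycle ?_ ?_
        · rw [← Equiv.Perm.mem_support, hsupS]
          simpa using hsxS
        · rw [← Equiv.Perm.mem_support, hsupS]
          simpa using hsyS
    obtain ⟨j, hj⟩ := hsc
    refine ⟨(blocksProd LA ^ k)⁻¹ * (S.formPerm ^ j * blocksProd LA ^ i), ?_, ?_⟩
    · have hτ₁ : blocksProd LA ∈ Subgroup.closure
          {blocksProd LA, blocksProd LB, S.formPerm} :=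
        Subgroup.subset_closure (by simp)
      have hσ : S.formPerm ∈ Subgroup.closure
          {blocksProd LA, blocksProd LB, S.formPerm} :=
        Subgroup.subset_closure (by simp)
      exact mul_mem (inv_mem (zpow_mem hτ₁ k)) (mul_mem (zpow_mem hσ j) (zpow_mem hτ₁ i))
    · simp only [Equiv.Perm.mul_apply]
      rw [hi, hj, ← hk]
      simp
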